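/- Let E_0, ..., E_n be distinct real numbers and let π_0, ..., π_n be strictly positive real numbers summing to 1. Then there exist real numbers β_1, ..., β_n and a normalization constant Z > 0 such that for every i, π_i = exp(-∑_{k=1}^n β_k E_i^k) / Z, where Z = ∑_{i=0}^n exp(-∑_{k=1}^n β_k E_i^k). -/

import Mathlib

open Finset

lemma sum_range_split (n : ℕ) (g : ℕ → ℝ) :
    ∑ k ∈ Finset.range (n + 1), g k = g 0 + ∑ k ∈ Finset.Icc 1 n, g k := by
  rw [Finset.range_eq_Ico, ← Finset.sum_Ico_consecutive g (Nat.zero_le 1) (Nat.le_add_left 1 n),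
    ← Finset.Ico_add_one_right_eq_Icc]
  simp

theorem exponential_representation_discrete (n : ℕ) (E : Fin (n + 1) → ℝ)
    (hE : Function.Injective E) (π : Fin (n + 1) → ℝ)
    (hπ : ∀ i, 0 < π i) (hsum : ∑ i, π i = 1) :
    ∃ β : ℕ → ℝ, ∃ Z : ℝ, 0 < Z ∧
      Z = ∑ i, Real.exp (-∑ k ∈ Finset.Icc 1 n, β k * E i ^ k) ∧
      ∀ i, π i = Real.exp (-∑ k ∈ Finset.Icc 1 n, β k * E i ^ k) / Z := by
  classical
  set p : Polynomial ℝ :=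
    Lagrange.interpolate Finset.univ E (fun i => Real.log (π i)) with hp
  have hEinj : Set.InjOn E (Finset.univ : Finset (Fin (n + 1))) := hE.injOn
  have hdeg : p.degree < (n + 1 : ℕ) := by
    have := Lagrange.degree_interpolate_lt (v := E) (s := Finset.univ) hEinj
      (r := fun i => Real.log (π i))
    simpa [hp] using this
  have hnd : p.natDegree < n + 1 := by
    by_cases h0 : p = 0
    · simp [h0]
    · exact (Polynomial.natDegree_lt_iff_degree_lt h0).2 (by exact_mod_cast hdeg)
  have heval : ∀ i, p.eval (E i) = Real.log (π i) := by
    intro i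
    have := Lagrange.eval_interpolate_at_node (v := E) (s := Finset.univ) hEinj
      (r := fun i => Real.log (π i)) (i := i) (Finset.mem_univ i)
    simpa [hp] using this
  refine ⟨fun k => -p.coeff k, Real.exp (-p.coeff 0), Real.exp_pos _, ?_, ?_⟩
  · have key : ∀ i : Fin (n + 1),
        Real.exp (-∑ k ∈ Finset.Icc 1 n, (-p.coeff k) * E i ^ k)
          = π i * Real.exp (-p.coeff 0) := by
      intro i
      have hev : p.eval (E i) = ∑ k ∈ Finset.range (n + 1), p.coeff k * E i ^ k :=
        Polynomial.eval_eq_sum_range' hnd _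
      have hsplit := sum_range_split n (fun k => p.coeff k * E i ^ k)
      have : -∑ k ∈ Finset.Icc 1 n, (-p.coeff k) * E i ^ k
          = Real.log (π i) + (-p.coeff 0) := by
        have := heval i
        rw [hev, hsplit] at this
        simp only [neg_mul, Finset.sum_neg_distrib, neg_neg]
        linarith
      rw [this, Real.exp_add, Real.exp_log (hπ i)]
    have key2 : ∀ i : Fin (n + 1),
        Real.exp (-∑ k ∈ Finset.Icc 1 n, (-p.coeff k) * E i ^ k)
          = π i * Real.exp (-p.coeff 0) := key
    rw [Finset.sum_congr rfl (fun i _ => key2 i), ← Finset.sum_mul, hsum, one_mul]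
  · intro i
    have key : Real.exp (-∑ k ∈ Finset.Icc 1 n, (-p.coeff k) * E i ^ k)
        = π i * Real.exp (-p.coeff 0) := by
      have hev : p.eval (E i) = ∑ k ∈ Finset.range (n + 1), p.coeff k * E i ^ k :=
        Polynomial.eval_eq_sum_range' hnd _
      have hsplit := sum_range_split n (fun k => p.coeff k * E i ^ k)
      have : -∑ k ∈ Finset.Icc 1 n, (-p.coeff k) * E i ^ k
          = Real.log (π i) + (-p.coeff 0) := by
        have := heval i
        rw [hev, hsplit] at this
        simp only [neg_mul, Finset.sum_neg_distrib, neg_neg]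
        linarith
      rw [this, Real.exp_add, Real.exp_log (hπ i)]
    rw [key, mul_div_assoc, div_self (Real.exp_pos _).ne', mul_one]
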